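/- Let w ∈ S_n, let b, b' ∈ W_w^ℓ, and let 1 ≤ i < ℓ. Then ẽ_i(b) = b' if and only if f̃_i(b') = b. -/

import Mathlib

open scoped Classical

noncomputable section

def sT (n i : ℕ) : Equiv.Perm (Fin n) :=
  if h : 1 ≤ i ∧ i < n then Equiv.swap ⟨i - 1, by omega⟩ ⟨i, h.2⟩ else 1

def wordProd (n : ℕ) (l : List ℕ) : Equiv.Perm (Fin n) :=
  (l.map (sT n)).prod

def len (n : ℕ) (w : Equiv.Perm (Fin n)) : ℕ :=
  sInf {k | ∃ l : List ℕ, (∀ i ∈ l, 1 ≤ i ∧ i < n) ∧ wordProd n l = w ∧ l.length = k}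

def IsReducedWord (n : ℕ) (w : Equiv.Perm (Fin n)) (l : List ℕ) : Prop :=
  (∀ i ∈ l, 1 ≤ i ∧ i < n) ∧ wordProd n l = w ∧ l.length = len n w

/-- The decreasing permutation with content `A`: product of the letters of `A`
in decreasing order. -/
def dperm (n : ℕ) (A : Finset ℕ) : Equiv.Perm (Fin n) :=
  wordProd n ((A.sort (· ≤ ·)).reverse)

/-- `c` encodes a decreasing factorization `w = wℓ ⋯ w¹` into `ℓ` decreasing factors,
where `c j` is the content of the factor `w^(j+1)` (0-indexed, so `c 0 = cont w¹`). -/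
def IsDecFactorizationC (n ℓ : ℕ) (w : Equiv.Perm (Fin n)) (c : Fin ℓ → Finset ℕ) : Prop :=
  (∀ j, ∀ a ∈ c j, 1 ≤ a ∧ a < n) ∧
    (List.ofFn fun j => dperm n (c j)).reverse.prod = w ∧
    len n w = ∑ j, (c j).card

/-- Pair the letters of the first list (the content of `w^(i+1)` in decreasing order)
with letters of the second finset (the content of `wⁱ`): each letter `b` is paired with
the smallest still unpaired `a > b`, if it exists.  Returns the pair
(unpaired letters of the first argument, unpaired letters of the second argument). -/
def pairAux : List ℕ → Finset ℕ → Finset ℕ × Finset ℕ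
  | [], A => (∅, A)
  | b :: bs, A =>
    if h : (A.filter fun a => b < a).Nonempty then
      pairAux bs (A.erase ((A.filter fun a => b < a).min' h))
    else
      ((pairAux bs A).1 ∪ {b}, (pairAux bs A).2)

/-- The unpaired letters of `cont w^(i+1)` (first argument `B`) in the
`w^(i+1) wⁱ`-pairing. -/
def Ldata (B A : Finset ℕ) : Finset ℕ :=
  (pairAux ((B.sort (· ≤ ·)).reverse) A).1

/-- The unpaired letters of `cont wⁱ` (second argument `A`) in the
`w^(i+1) wⁱ`-pairing. -/
def Rdata (B A : Finset ℕ) : Finset ℕ :=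
  (pairAux ((B.sort (· ≤ ·)).reverse) A).2

/-- The raising crystal operator on a pair of contents `(B, A) = (cont w^(i+1), cont wⁱ)`. -/
def eC (B A : Finset ℕ) : Option (Finset ℕ × Finset ℕ) :=
  if h : (Ldata B A).Nonempty then
    some (B.erase ((Ldata B A).min' h),
      insert ((Ldata B A).min' h - sInf {j | (Ldata B A).min' h - j - 1 ∉ B}) A)
  else none

/-- The lowering crystal operator on a pair of contents `(B, A) = (cont w^(i+1), cont wⁱ)`. -/
def fC (B A : Finset ℕ) : Option (Finset ℕ × Finset ℕ) :=
  if h : (Rdata B A).Nonempty then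
    some (insert ((Rdata B A).max' h + sInf {j | (Rdata B A).max' h + j + 1 ∉ A}) B,
      A.erase ((Rdata B A).max' h))
  else none

/-- The crystal raising operator `ẽᵢ` (1 ≤ i < ℓ) on decreasing factorizations encoded by
contents; it acts on the factors `w^(i+1) wⁱ`, i.e. on `c ⟨i⟩` and `c ⟨i-1⟩`. -/
def eOp {ℓ : ℕ} (i : ℕ) (c : Fin ℓ → Finset ℕ) : Option (Fin ℓ → Finset ℕ) :=
  if h : 1 ≤ i ∧ i < ℓ then
    match eC (c ⟨i, h.2⟩) (c ⟨i - 1, by omega⟩) with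
    | none => none
    | some (B', A') =>
        some (Function.update (Function.update c ⟨i, h.2⟩ B') ⟨i - 1, by omega⟩ A')
  else none

/-- The crystal lowering operator `f̃ᵢ` (1 ≤ i < ℓ) on decreasing factorizations encoded by
contents. -/
def fOp {ℓ : ℕ} (i : ℕ) (c : Fin ℓ → Finset ℕ) : Option (Fin ℓ → Finset ℕ) :=
  if h : 1 ≤ i ∧ i < ℓ then
    match fC (c ⟨i, h.2⟩) (c ⟨i - 1, by omega⟩) with
    | none => none
    | some (B', A') =>
        some (Function.update (Function.update c ⟨i, h.2⟩ B') ⟨i - 1, by omega⟩ A')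
  else none

/-- `d`-fold iterate of `ẽᵢ`. -/
def eIter {ℓ : ℕ} (i : ℕ) : ℕ → (Fin ℓ → Finset ℕ) → Option (Fin ℓ → Finset ℕ)
  | 0, c => some c
  | d + 1, c => (eOp i c).bind (eIter i d)

/-- `d`-fold iterate of `f̃ᵢ`. -/
def fIter {ℓ : ℕ} (i : ℕ) : ℕ → (Fin ℓ → Finset ℕ) → Option (Fin ℓ → Finset ℕ)
  | 0, c => some c
  | d + 1, c => (fOp i c).bind (fIter i d)


lemma pairAux_snd_subset (l : List ℕ) (P : Finset ℕ) : (pairAux l P).2 ⊆ P := by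
  induction l generalizing P with
  | nil => simp [pairAux]
  | cons b bs ih =>
    rw [pairAux]
    split
    · exact (ih _).trans (Finset.erase_subset _ _)
    · exact ih P

lemma pairAux_fst_subset (l : List ℕ) (P : Finset ℕ) : ∀ u ∈ (pairAux l P).1, u ∈ l := by
  induction l generalizing P with
  | nil => simp [pairAux]
  | cons b bs ih =>
    rw [pairAux]
    split
    · intro u hu; exact List.mem_cons_of_mem _ (ih _ u hu)
    · intro u hu
      rcases Finset.mem_union.1 hu with h | h
      · exact List.mem_cons_of_mem _ (ih _ u h)
      · simp at h; simp [h]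

lemma pairAux_append (l₁ l₂ : List ℕ) (P : Finset ℕ) :
    pairAux (l₁ ++ l₂) P = ((pairAux l₁ P).1 ∪ (pairAux l₂ (pairAux l₁ P).2).1,
      (pairAux l₂ (pairAux l₁ P).2).2) := by
  induction l₁ generalizing P with
  | nil => simp [pairAux]
  | cons b bs ih =>
    rw [List.cons_append, pairAux, pairAux]
    split
    · exact ih _
    · rw [ih P]
      ext u <;> simp [Finset.mem_union] <;> tauto

lemma pairAux_insert_high {x : ℕ} {P : Finset ℕ} (hxP : x ∉ P) :
    ∀ {l : List ℕ}, (∀ b ∈ l, x ≤ b) →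
      pairAux l (insert x P) = ((pairAux l P).1, insert x (pairAux l P).2) := by
  intro l
  induction l generalizing P with
  | nil => intro _; simp [pairAux]
  | cons b bs ih =>
    intro hl
    have hb : x ≤ b := hl b (List.mem_cons_self)
    have hf : (insert x P).filter (fun a => b < a) = P.filter (fun a => b < a) := by
      rw [Finset.filter_insert, if_neg (by omega)]
    rw [pairAux, pairAux, hf]
    split
    · rename_i h
      have hm : (P.filter fun a => b < a).min' h ∈ P :=
        Finset.mem_of_mem_filter _ (Finset.min'_mem _ h)
      have hne : x ≠ (P.filter fun a => b < a).min' h := by rintro rfl; exact hxP hm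
      rw [Finset.erase_insert_of_ne hne]
      exact ih (fun h' => hxP (Finset.mem_of_mem_erase h'))
        (fun c hc => hl c (List.mem_cons_of_mem _ hc))
    · rw [ih hxP (fun c hc => hl c (List.mem_cons_of_mem _ hc))]

lemma pairAux_insert_low {x : ℕ} :
    ∀ {l : List ℕ} {P : Finset ℕ}, x ∉ P → (∀ m ∈ P, m < x) → (∀ b ∈ l, b < x) →
      (pairAux l P).1 = ∅ →
      pairAux l (insert x P) = ((pairAux l P).1, insert x (pairAux l P).2) := by
  intro l
  induction l with
  | nil => intro P _ _ _ _; simp [pairAux]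
  | cons b bs ih =>
    intro P hxP hP hl h1
    have hb : b < x := hl b (List.mem_cons_self)
    rw [pairAux] at h1 ⊢
    rw [pairAux]
    have hpos : (P.filter fun a => b < a).Nonempty := by
      by_contra hneg
      rw [dif_neg hneg] at h1
      have : b ∈ (∅ : Finset ℕ) := h1 ▸ Finset.mem_union_right _ (Finset.mem_singleton_self b)
      simp at this
    rw [dif_pos hpos] at h1 ⊢
    have hfi : (insert x P).filter (fun a => b < a) = insert x (P.filter fun a => b < a) := by
      rw [Finset.filter_insert, if_pos hb]
    have hmem : (P.filter fun a => b < a).min' hpos ∈ P :=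
      Finset.mem_of_mem_filter _ (Finset.min'_mem _ hpos)
    have hmlt : (P.filter fun a => b < a).min' hpos < x := hP _ hmem
    have hmin : ((insert x P).filter (fun a => b < a)).min'
        (by rw [hfi]; exact Finset.insert_nonempty _ _) = (P.filter fun a => b < a).min' hpos := by
      apply le_antisymm
      · exact Finset.min'_le _ _ (by rw [hfi]; exact Finset.mem_insert_of_mem (Finset.min'_mem _ hpos))
      · apply Finset.le_min'
        intro y hy
        rw [hfi, Finset.mem_insert] at hy
        rcases hy with rfl | hy
        · omega
        · exact Finset.min'_le _ _ hy
    rw [dif_pos (by rw [hfi]; exact Finset.insert_nonempty _ _), hmin,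
      Finset.erase_insert_of_ne (by omega)]
    exact ih (fun h' => hxP (Finset.mem_of_mem_erase h'))
      (fun m hm => hP m (Finset.mem_of_mem_erase hm))
      (fun c hc => hl c (List.mem_cons_of_mem _ hc)) h1

lemma pairAux_insert_mid {x : ℕ} :
    ∀ {l : List ℕ} {P : Finset ℕ}, x ∉ P → x ∈ (pairAux l (insert x P)).2 →
      pairAux l (insert x P) = ((pairAux l P).1, insert x (pairAux l P).2) := by
  intro l
  induction l with
  | nil => intro P _ _; simp [pairAux]
  | cons b bs ih =>
    intro P hxP hx
    by_cases hb : x ≤ b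
    · -- filter unchanged
      have hf : (insert x P).filter (fun a => b < a) = P.filter (fun a => b < a) := by
        rw [Finset.filter_insert, if_neg (by omega)]
      rw [pairAux, hf] at hx
      rw [pairAux, pairAux, hf]
      split
      · rename_i h
        have hmem : (P.filter fun a => b < a).min' h ∈ P :=
          Finset.mem_of_mem_filter _ (Finset.min'_mem _ h)
        have hne : x ≠ (P.filter fun a => b < a).min' h := by rintro rfl; exact hxP hmem
        rw [dif_pos h, Finset.erase_insert_of_ne hne] at hx
        rw [Finset.erase_insert_of_ne hne]
        exact ih (fun h' => hxP (Finset.mem_of_mem_erase h')) hx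
      · rename_i h
        rw [dif_neg h] at hx
        rw [ih hxP hx]
    · push_neg at hb
      have hxS : x ∈ (insert x P).filter (fun a => b < a) :=
        Finset.mem_filter.2 ⟨Finset.mem_insert_self _ _, hb⟩
      have hpos' : ((insert x P).filter (fun a => b < a)).Nonempty := ⟨x, hxS⟩
      rw [pairAux, dif_pos hpos'] at hx
      set S := (insert x P).filter (fun a => b < a) with hS
      have hSsub : ∀ y ∈ S, y = x ∨ y ∈ P.filter (fun a => b < a) := by
        intro y hy
        rcases Finset.mem_insert.1 (Finset.mem_filter.1 hy).1 with h | h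
        · exact Or.inl h
        · exact Or.inr (Finset.mem_filter.2 ⟨h, (Finset.mem_filter.1 hy).2⟩)
      by_cases hcase : ∃ hp : (P.filter fun a => b < a).Nonempty,
          (P.filter fun a => b < a).min' hp < x
      · obtain ⟨hp, hmlt⟩ := hcase
        have hmin : S.min' hpos' = (P.filter fun a => b < a).min' hp := by
          apply le_antisymm
          · exact Finset.min'_le _ _ (by
              apply Finset.mem_filter.2
              exact ⟨Finset.mem_insert_of_mem (Finset.mem_of_mem_filter _ (Finset.min'_mem _ hp)),
                (Finset.mem_filter.1 (Finset.min'_mem _ hp)).2⟩)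
          · apply Finset.le_min'
            intro y hy
            rcases hSsub y hy with rfl | hy'
            · omega
            · exact Finset.min'_le _ _ hy'
        rw [hmin] at hx
        have hmem : (P.filter fun a => b < a).min' hp ∈ P :=
          Finset.mem_of_mem_filter _ (Finset.min'_mem _ hp)
        have hne : x ≠ (P.filter fun a => b < a).min' hp := by omega
        rw [Finset.erase_insert_of_ne hne] at hx
        rw [pairAux, dif_pos hpos', hmin, Finset.erase_insert_of_ne hne, pairAux, dif_pos hp]
        exact ih (fun h' => hxP (Finset.mem_of_mem_erase h')) hx
      · -- min' S = x, hence x gets erased: contradiction with hx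
        exfalso
        have hminx : S.min' hpos' = x := by
          apply le_antisymm (Finset.min'_le _ _ hxS)
          apply Finset.le_min'
          intro y hy
          rcases hSsub y hy with rfl | hy'
          · exact le_rfl
          · by_contra hyx
            exact hcase ⟨⟨y, hy'⟩, lt_of_le_of_lt (Finset.min'_le _ _ hy') (by omega)⟩
        rw [hminx, Finset.erase_insert hxP] at hx
        exact hxP (pairAux_snd_subset _ _ hx)

lemma pairAux_mem_of_le {m : ℕ} :
    ∀ {l : List ℕ} {P : Finset ℕ}, (∀ b ∈ l, m ≤ b) → m ∈ P → m ∈ (pairAux l P).2 := by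
  intro l
  induction l with
  | nil => intro P _ hm; simpa [pairAux] using hm
  | cons b bs ih =>
    intro P hl hm
    rw [pairAux]
    split
    · rename_i h
      apply ih (fun c hc => hl c (List.mem_cons_of_mem _ hc))
      apply Finset.mem_erase.2 ⟨?_, hm⟩
      intro heq
      have : b < m := (Finset.mem_filter.1 (heq ▸ Finset.min'_mem _ h)).2
      exact absurd (hl b (List.mem_cons_self)) (by omega)
    · exact ih (fun c hc => hl c (List.mem_cons_of_mem _ hc)) hm

lemma pairAux_final_mem_low {x : ℕ} :
    ∀ {l : List ℕ} {P : Finset ℕ}, (∀ b ∈ l, b < x) → x ∈ (pairAux l P).2 →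
      ∀ m ∈ P, x < m → m ∈ (pairAux l P).2 := by
  intro l
  induction l with
  | nil => intro P _ _ m hm _; simpa [pairAux] using hm
  | cons b bs ih =>
    intro P hl hx m hm hxm
    have hb : b < x := hl b (List.mem_cons_self)
    rw [pairAux] at hx ⊢
    split
    · rename_i h
      rw [dif_pos h] at hx
      have hxP : x ∈ P.erase ((P.filter fun a => b < a).min' h) := pairAux_snd_subset _ _ hx
      have hminlt : (P.filter fun a => b < a).min' h < x := by
        have hle : (P.filter fun a => b < a).min' h ≤ x := by
          apply Finset.min'_le
          exact Finset.mem_filter.2 ⟨Finset.mem_of_mem_erase hxP, hb⟩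
        have hne : x ≠ (P.filter fun a => b < a).min' h := (Finset.mem_erase.1 hxP).1
        omega
      exact ih (fun c hc => hl c (List.mem_cons_of_mem _ hc)) hx m
        (Finset.mem_erase.2 ⟨by omega, hm⟩) hxm
    · rename_i h
      rw [dif_neg h] at hx
      exact ih (fun c hc => hl c (List.mem_cons_of_mem _ hc)) hx m hm hxm

lemma pairAux_unpaired_not_lt {x : ℕ} :
    ∀ {l : List ℕ} {P : Finset ℕ}, x ∈ (pairAux l P).2 →
      ∀ b ∈ (pairAux l P).1, x ≤ b := by
  intro l
  induction l with
  | nil => intro P _ b hb; simp [pairAux] at hb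
  | cons c cs ih =>
    intro P hx b hb
    rw [pairAux] at hx hb
    split at hx
    · rename_i h
      rw [dif_pos h] at hb
      exact ih hx b hb
    · rename_i h
      rw [dif_neg h] at hb
      rcases Finset.mem_union.1 hb with hb' | hb'
      · exact ih hx b hb'
      · have : b = c := by simpa using hb'
        subst this
        by_contra hlt
        exact h ⟨x, Finset.mem_filter.2 ⟨pairAux_snd_subset _ _ hx, by omega⟩⟩

lemma pairAux_pred_not_mem {x : ℕ} (hx0 : x ≠ 0) :
    ∀ {l : List ℕ} {P : Finset ℕ}, x ∈ (pairAux l P).2 → (x - 1) ∉ l := by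
  intro l
  induction l with
  | nil => intro P _; simp
  | cons b bs ih =>
    intro P hx
    rw [pairAux] at hx
    intro hmem
    rcases List.mem_cons.1 hmem with heq | hmem'
    · subst heq
      split at hx
      · rename_i h
        have hxP : x ∈ P.erase ((P.filter fun a => x - 1 < a).min' h) := pairAux_snd_subset _ _ hx
        have h1 : (P.filter fun a => x - 1 < a).min' h ≤ x := Finset.min'_le _ _
          (Finset.mem_filter.2 ⟨Finset.mem_of_mem_erase hxP, by omega⟩)
        have h2 : x - 1 < (P.filter fun a => x - 1 < a).min' h :=
          (Finset.mem_filter.1 (Finset.min'_mem _ h)).2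
        have : (P.filter fun a => x - 1 < a).min' h = x := by omega
        exact (Finset.mem_erase.1 hxP).1 this.symm
      · rename_i h
        exact h ⟨x, Finset.mem_filter.2 ⟨pairAux_snd_subset _ _ hx, by omega⟩⟩
    · split at hx
      · exact ih hx hmem'
      · exact ih hx hmem'

lemma range'_reverse_succ (a s : ℕ) :
    (List.range' a (s + 1)).reverse = (a + s) :: (List.range' a s).reverse := by
  rw [List.range'_concat]
  simp

lemma pairAux_block (a : ℕ) :
    ∀ (s : ℕ) (R : Finset ℕ), (∀ k, a < k → k ≤ a + s → k ∈ R) →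
      pairAux (List.range' a s).reverse R = (∅, R.filter fun m => ¬(a < m ∧ m ≤ a + s)) := by
  intro s
  induction s with
  | zero =>
    intro R _
    simp only [List.range', List.reverse_nil, pairAux]
    congr 1
    ext m
    simp only [Finset.mem_filter]
    exact ⟨fun h => ⟨h, by omega⟩, fun h => h.1⟩
  | succ s ih =>
    intro R hR
    rw [range'_reverse_succ, pairAux]
    have hmem : a + s + 1 ∈ R.filter (fun m => a + s < m) :=
      Finset.mem_filter.2 ⟨hR _ (by omega) (by omega), by omega⟩
    have hpos : (R.filter fun m => a + s < m).Nonempty := ⟨_, hmem⟩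
    rw [dif_pos hpos]
    have hmin : (R.filter fun m => a + s < m).min' hpos = a + s + 1 := by
      apply le_antisymm (Finset.min'_le _ _ hmem)
      apply Finset.le_min'
      intro y hy
      have := (Finset.mem_filter.1 hy).2
      omega
    rw [hmin, ih (R.erase (a + s + 1)) (fun k hk1 hk2 =>
      Finset.mem_erase.2 ⟨by omega, hR k hk1 (by omega)⟩)]
    congr 1
    ext m
    simp only [Finset.mem_filter, Finset.mem_erase]
    constructor
    · rintro ⟨⟨hne, hm⟩, hp⟩; exact ⟨hm, by omega⟩
    · rintro ⟨hm, hp⟩; exact ⟨⟨by omega, hm⟩, by omega⟩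

lemma pairAux_block_mem (a : ℕ) :
    ∀ (s : ℕ) (R : Finset ℕ), (∀ m ∈ R, m ≤ a + s) →
      (pairAux (List.range' a s).reverse R).1 = ∅ →
      ∀ k, a < k → k ≤ a + s → k ∈ R := by
  intro s
  induction s with
  | zero => intro R _ _ k h1 h2; omega
  | succ s ih =>
    intro R hbd h1 k hk1 hk2
    rw [range'_reverse_succ, pairAux] at h1
    by_cases hpos : (R.filter fun m => a + s < m).Nonempty
    · rw [dif_pos hpos] at h1
      have hminmem := Finset.min'_mem _ hpos
      have hc := Finset.mem_filter.1 hminmem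
      have hmineq : (R.filter fun m => a + s < m).min' hpos = a + s + 1 := by
        have := hbd _ hc.1; omega
      have hRmem : a + s + 1 ∈ R := by rw [← hmineq]; exact hc.1
      rw [hmineq] at h1
      rcases Nat.lt_or_ge k (a + s + 1) with hlt | hge
      · exact Finset.mem_of_mem_erase
          (ih (R.erase (a + s + 1)) (fun m hm => by
            have := hbd m (Finset.mem_of_mem_erase hm)
            have := (Finset.mem_erase.1 hm).1
            omega) h1 k hk1 (by omega))
      · have : k = a + s + 1 := by omega
        exact this ▸ hRmem
    · rw [dif_neg hpos] at h1
      exact absurd h1 (by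
        intro h
        have : a + s ∈ (∅ : Finset ℕ) := h ▸ Finset.mem_union_right _ (Finset.mem_singleton_self _)
        simp at this)

lemma pairAux_card_le {x K : ℕ} :
    ∀ {l : List ℕ} {P : Finset ℕ}, x ∈ (pairAux l P).2 →
      ((P \ (pairAux l P).2).filter fun m => x < m ∧ m ≤ K).card
        ≤ (l.filter fun b => decide (x ≤ b ∧ b < K)).length := by
  intro l
  induction l with
  | nil => intro P hx; simp [pairAux]
  | cons b bs ih =>
    intro P hx
    rw [pairAux] at hx ⊢
    rw [List.filter_cons]
    split
    · rename_i h
      rw [dif_pos h] at hx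
      set e := (P.filter fun a => b < a).min' h with he
      have heP : e ∈ P := Finset.mem_of_mem_filter _ (Finset.min'_mem _ h)
      have hfin : (pairAux bs (P.erase e)).2 ⊆ P.erase e := pairAux_snd_subset _ _
      have hef : e ∉ (pairAux bs (P.erase e)).2 := fun hc => by simpa using Finset.mem_erase.1 (hfin hc)
      have hD : P \ (pairAux bs (P.erase e)).2
          = insert e ((P.erase e) \ (pairAux bs (P.erase e)).2) := by
        ext m
        simp only [Finset.mem_sdiff, Finset.mem_insert, Finset.mem_erase]
        constructor
        · rintro ⟨hm, hnm⟩
          by_cases hme : m = e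
          · exact Or.inl hme
          · exact Or.inr ⟨⟨hme, hm⟩, hnm⟩
        · rintro (rfl | ⟨⟨_, hm⟩, hnm⟩)
          · exact ⟨heP, hef⟩
          · exact ⟨hm, hnm⟩
      rw [hD, Finset.filter_insert]
      by_cases hpe : x < e ∧ e ≤ K
      · rw [if_pos hpe]
        have hbp : x ≤ b ∧ b < K := by
          constructor
          · by_contra hbx
            push_neg at hbx
            have hxP : x ∈ P := Finset.mem_of_mem_erase (hfin hx)
            have : e ≤ x := Finset.min'_le _ _ (Finset.mem_filter.2 ⟨hxP, by omega⟩)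
            omega
          · have : b < e := (Finset.mem_filter.1 (Finset.min'_mem _ h)).2
            omega
        rw [if_pos (by simpa using hbp)]
        calc (insert e (((P.erase e) \ (pairAux bs (P.erase e)).2).filter
              fun m => x < m ∧ m ≤ K)).card
            ≤ (((P.erase e) \ (pairAux bs (P.erase e)).2).filter
              fun m => x < m ∧ m ≤ K).card + 1 := Finset.card_insert_le _ _
          _ ≤ (bs.filter fun b => decide (x ≤ b ∧ b < K)).length + 1 := by
              have := ih hx; omega
          _ = _ := by simp [List.length_cons]
      · rw [if_neg hpe]
        have hle := ih hx
        split
        · simp only [List.length_cons]; omega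
        · omega
    · rename_i h
      rw [dif_neg h] at hx
      dsimp only
      have hle := ih hx
      split
      · simp only [List.length_cons]; omega
      · omega

lemma sorted_range' (x m : ℕ) : List.Pairwise (· ≤ ·) (List.range' x m) :=
  List.Pairwise.imp le_of_lt (List.pairwise_lt_range' (s := x) (n := m) 1 (by omega))

lemma sort_decomp (B : Finset ℕ) (x m : ℕ) (h : ∀ k, x ≤ k → k < x + m → k ∈ B) :
    B.sort (· ≤ ·) = ((B.filter fun k => k < x).sort (· ≤ ·)) ++ List.range' x m
      ++ ((B.filter fun k => x + m ≤ k).sort (· ≤ ·)) := by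
  refine (fun hp h1 h2 => List.Perm.eq_of_pairwise' (r := (· ≤ ·)) h1 h2 hp) ?_ ?_ ?_
  · apply List.perm_of_nodup_nodup_toFinset_eq (Finset.sort_nodup _ _)
    · refine List.Nodup.append (List.Nodup.append (Finset.sort_nodup _ _)
        (List.nodup_range' 1 (by omega)) ?_) (Finset.sort_nodup _ _) ?_
      · intro a ha ha'
        have h1 := (Finset.mem_filter.1 (Finset.mem_sort (α := ℕ) (· ≤ ·) |>.1 ha)).2
        have h2 := List.mem_range'_1.1 ha'
        omega
      · intro a ha ha'
        have h2 := (Finset.mem_filter.1 (Finset.mem_sort (α := ℕ) (· ≤ ·) |>.1 ha')).2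
        rcases List.mem_append.1 ha with ha | ha
        · have h1 := (Finset.mem_filter.1 (Finset.mem_sort (α := ℕ) (· ≤ ·) |>.1 ha)).2
          omega
        · have h1 := List.mem_range'_1.1 ha
          omega
    · ext k
      simp only [List.toFinset_append, Finset.mem_union, List.mem_toFinset,
        Finset.sort_toFinset, Finset.mem_filter, Finset.mem_sort, List.mem_range'_1]
      constructor
      · intro hk
        by_cases h1 : k < x
        · exact Or.inl (Or.inl ⟨hk, h1⟩)
        · by_cases h2 : x + m ≤ k
          · exact Or.inr ⟨hk, h2⟩
          · exact Or.inl (Or.inr ⟨by omega, by omega⟩)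
      · rintro ((⟨hk, _⟩ | ⟨h1, h2⟩) | ⟨hk, _⟩)
        · exact hk
        · exact h k h1 (by omega)
        · exact hk
  · exact Finset.pairwise_sort _ _
  · rw [List.pairwise_append, List.pairwise_append]
    refine ⟨⟨Finset.pairwise_sort _ _, sorted_range' _ _, ?_⟩, Finset.pairwise_sort _ _, ?_⟩
    · intro a ha b hb
      have h1 := (Finset.mem_filter.1 (Finset.mem_sort (α := ℕ) (· ≤ ·) |>.1 ha)).2
      have h2 := List.mem_range'_1.1 hb
      omega
    · intro a ha b hb
      have h2 := (Finset.mem_filter.1 (Finset.mem_sort (α := ℕ) (· ≤ ·) |>.1 hb)).2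
      rcases List.mem_append.1 ha with ha | ha
      · have h1 := (Finset.mem_filter.1 (Finset.mem_sort (α := ℕ) (· ≤ ·) |>.1 ha)).2
        omega
      · have h1 := List.mem_range'_1.1 ha
        omega

theorem fwd_core (B A : Finset ℕ) (x t cz : ℕ) (hcz : x + t = cz) (hx1 : 1 ≤ x)
    (hBmem : ∀ k, x ≤ k → k ≤ cz → k ∈ B) (hx1B : x - 1 ∉ B)
    (hcL : cz ∈ Ldata B A) (hmin : ∀ u ∈ Ldata B A, cz ≤ u) (hxA : x ∉ A) :
    ∃ hR : (Rdata (B.erase cz) (insert x A)).Nonempty,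
      (Rdata (B.erase cz) (insert x A)).max' hR = x ∧
      sInf {j | x + j + 1 ∉ insert x A} = t := by
  classical
  subst hcz
  set c₀ := x + t with hc₀
  set Bhi := B.filter (fun k => x + (t + 1) ≤ k) with hBhi
  set Blo := B.filter (fun k => k < x) with hBlo
  set lhi := (Bhi.sort (· ≤ ·)).reverse with hlhi
  set llo := (Blo.sort (· ≤ ·)).reverse with hllo
  have hmemhi : ∀ b ∈ lhi, c₀ + 1 ≤ b := by
    intro b hb
    have := (Finset.mem_filter.1 ((Finset.mem_sort (α := ℕ) (· ≤ ·)).1 (List.mem_reverse.1 hb))).2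
    omega
  have hmemlo : ∀ b ∈ llo, b < x := by
    intro b hb
    exact (Finset.mem_filter.1 ((Finset.mem_sort (α := ℕ) (· ≤ ·)).1 (List.mem_reverse.1 hb))).2
  have hdecomp : (B.sort (· ≤ ·)).reverse
      = lhi ++ ((c₀ :: (List.range' x t).reverse) ++ llo) := by
    rw [sort_decomp B x (t + 1) (fun k h1 h2 => hBmem k h1 (by omega))]
    rw [List.reverse_append, List.reverse_append, ← range'_reverse_succ]
  -- the (B, A) run
  set Q := (pairAux lhi A).2 with hQ
  set Uhi := (pairAux lhi A).1 with hUhi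
  have hQA : Q ⊆ A := pairAux_snd_subset _ _
  have hLsplit : Ldata B A
      = Uhi ∪ (pairAux ((c₀ :: (List.range' x t).reverse) ++ llo) Q).1 := by
    rw [Ldata, hdecomp, pairAux_append]
  have hUhimem : ∀ u ∈ Uhi, c₀ + 1 ≤ u := fun u hu => hmemhi u (pairAux_fst_subset _ _ u hu)
  -- c₀ is unpaired: the filter must be empty
  have hQfil : Q.filter (fun a => c₀ < a) = ∅ := by
    by_contra hne
    rw [← ne_eq, ← Finset.nonempty_iff_ne_empty] at hne
    have : pairAux ((c₀ :: (List.range' x t).reverse) ++ llo) Q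
        = pairAux ((List.range' x t).reverse ++ llo)
            (Q.erase ((Q.filter fun a => c₀ < a).min' hne)) := by
      rw [List.cons_append, pairAux, dif_pos hne]
    rw [hLsplit, this] at hcL
    rcases Finset.mem_union.1 hcL with h | h
    · exact absurd (hUhimem _ h) (by omega)
    · have := pairAux_fst_subset _ _ _ h
      rcases List.mem_append.1 this with h' | h'
      · have := List.mem_range'_1.1 (List.mem_reverse.1 h')
        omega
      · have := hmemlo _ h'
        omega
  have hQle : ∀ m ∈ Q, m ≤ c₀ := by
    intro m hm
    by_contra hgt
    have : m ∈ Q.filter (fun a => c₀ < a) := Finset.mem_filter.2 ⟨hm, by omega⟩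
    rw [hQfil] at this
    simp at this
  have hrest : pairAux ((c₀ :: (List.range' x t).reverse) ++ llo) Q
      = ((pairAux ((List.range' x t).reverse ++ llo) Q).1 ∪ {c₀},
         (pairAux ((List.range' x t).reverse ++ llo) Q).2) := by
    rw [List.cons_append, pairAux, dif_neg (by rw [hQfil]; exact Finset.not_nonempty_empty)]
  rw [hrest] at hLsplit
  simp only at hLsplit
  rw [pairAux_append] at hLsplit
  set Ublk := (pairAux (List.range' x t).reverse Q).1 with hUblk
  set V := (pairAux (List.range' x t).reverse Q).2 with hV
  set Ulo := (pairAux llo V).1 with hUlo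
  set Pf := (pairAux llo V).2 with hPf
  have hUblk0 : Ublk = ∅ := by
    rw [Finset.eq_empty_iff_forall_notMem]
    intro u hu
    have hum : u ∈ Ldata B A := by
      rw [hLsplit]
      exact Finset.mem_union_right _ (Finset.mem_union_left _ (Finset.mem_union_left _ hu))
    have := List.mem_range'_1.1 (List.mem_reverse.1 (pairAux_fst_subset _ _ u hu))
    have := hmin u hum
    omega
  have hblkQ : ∀ k, x < k → k ≤ x + t → k ∈ Q :=
    pairAux_block_mem x t Q (fun m hm => hQle m hm) hUblk0
  have hVeq : pairAux (List.range' x t).reverse Q = (∅, Q.filter fun m => ¬(x < m ∧ m ≤ x + t)) :=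
    pairAux_block x t Q hblkQ
  have hUlo0 : Ulo = ∅ := by
    rw [Finset.eq_empty_iff_forall_notMem]
    intro u hu
    have hum : u ∈ Ldata B A := by
      rw [hLsplit]
      exact Finset.mem_union_right _ (Finset.mem_union_left _ (Finset.mem_union_right _ hu))
    have := hmemlo _ (pairAux_fst_subset _ _ u hu)
    have := hmin u hum
    omega
  have hVsub : V = Q.filter fun m => ¬(x < m ∧ m ≤ x + t) := by rw [hV, hVeq]
  have hVlt : ∀ m ∈ V, m < x := by
    intro m hm
    rw [hVsub, Finset.mem_filter] at hm
    have h1 := hQle m hm.1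
    have h2 := hm.2
    have h3 : m ≠ x := fun h => hxA (h ▸ hQA hm.1)
    omega
  have hxV : x ∉ V := fun h => hxA (hQA (hVsub ▸ h |> Finset.mem_of_mem_filter _))
  -- the (B', A') run
  have hdecomp' : ((B.erase c₀).sort (· ≤ ·)).reverse = lhi ++ ((List.range' x t).reverse ++ llo) := by
    rw [sort_decomp (B.erase c₀) x t (fun k h1 h2 => Finset.mem_erase.2 ⟨by omega, hBmem k h1 (by omega)⟩)]
    rw [List.reverse_append, List.reverse_append]
    have h1 : (B.erase c₀).filter (fun k => x + t ≤ k) = Bhi := by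
      ext k
      simp only [hBhi, Finset.mem_filter, Finset.mem_erase]
      constructor
      · rintro ⟨⟨hne, hk⟩, hge⟩; exact ⟨hk, by omega⟩
      · rintro ⟨hk, hge⟩; exact ⟨⟨by omega, hk⟩, by omega⟩
    have h2 : (B.erase c₀).filter (fun k => k < x) = Blo := by
      ext k
      simp only [hBlo, Finset.mem_filter, Finset.mem_erase]
      constructor
      · rintro ⟨⟨hne, hk⟩, hlt⟩; exact ⟨hk, hlt⟩
      · rintro ⟨hk, hlt⟩; exact ⟨⟨by omega, hk⟩, hlt⟩
    rw [h1, h2]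
  have hhi' : pairAux lhi (insert x A) = (Uhi, insert x Q) :=
    pairAux_insert_high hxA (fun b hb => by have := hmemhi b hb; omega)
  have hblk' : pairAux (List.range' x t).reverse (insert x Q)
      = (∅, insert x V) := by
    rw [pairAux_block x t _ (fun k h1 h2 => Finset.mem_insert_of_mem (hblkQ k h1 h2))]
    congr 1
    rw [hVsub, Finset.filter_insert, if_pos (by omega)]
  have hxQ : x ∉ Q := fun h => hxA (hQA h)
  have hlo' : pairAux llo (insert x V) = (Ulo, insert x Pf) :=
    pairAux_insert_low hxV hVlt hmemlo hUlo0
  have hRdata : Rdata (B.erase c₀) (insert x A) = insert x Pf := by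
    rw [Rdata, hdecomp', pairAux_append, hhi', pairAux_append]
    simp only
    rw [hblk']
    simp only
    rw [hlo']
  have hPflt : ∀ m ∈ Pf, m < x := fun m hm => hVlt m (pairAux_snd_subset _ _ hm)
  have hRne : (Rdata (B.erase c₀) (insert x A)).Nonempty := by
    rw [hRdata]; exact Finset.insert_nonempty _ _
  refine ⟨hRne, ?_, ?_⟩
  · apply le_antisymm
    · apply Finset.max'_le
      intro y hy
      rw [hRdata, Finset.mem_insert] at hy
      rcases hy with rfl | hy
      · exact le_rfl
      · exact le_of_lt (hPflt y hy)
    · exact Finset.le_max' _ _ (by rw [hRdata]; exact Finset.mem_insert_self _ _)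
  · have hc1A : c₀ + 1 ∉ A := by
      intro hc
      have : c₀ + 1 ∈ Q := pairAux_mem_of_le (m := c₀ + 1) hmemhi hc
      have := hQle _ this
      omega
    have htmem : t ∈ {j | x + j + 1 ∉ insert x A} := by
      rw [Set.mem_setOf_eq, Finset.mem_insert]
      push_neg
      exact ⟨by omega, hc1A⟩
    apply le_antisymm
    · exact Nat.sInf_le htmem
    · by_contra hlt
      push_neg at hlt
      have hmem := Nat.sInf_mem (⟨t, htmem⟩ : Set.Nonempty {j | x + j + 1 ∉ insert x A})
      set j := sInf {j | x + j + 1 ∉ insert x A} with hj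
      have hjm : x + j + 1 ∉ insert x A := hmem
      have : x + j + 1 ∈ Q := hblkQ _ (by omega) (by omega)
      exact hjm (Finset.mem_insert_of_mem (hQA this))

lemma length_filter_eq_card (B : Finset ℕ) (p : ℕ → Prop) [DecidablePred p] :
    (((B.sort (· ≤ ·)).reverse).filter (fun b => decide (p b))).length = (B.filter p).card := by
  have hnd : (((B.sort (· ≤ ·)).reverse).filter (fun b => decide (p b))).Nodup :=
    (List.nodup_reverse.2 (Finset.sort_nodup _ _)).filter _
  rw [← List.toFinset_card_of_nodup hnd]
  congr 1
  ext k
  simp only [List.mem_toFinset, List.mem_filter, List.mem_reverse, Finset.mem_sort,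
    Finset.mem_filter, decide_eq_true_eq]

theorem bwd_core (B' A' : Finset ℕ) (a s cz : ℕ) (hcz : a + s = cz) (ha1 : 1 ≤ a)
    (hA'mem : ∀ k, a ≤ k → k ≤ cz → k ∈ A') (htop : cz + 1 ∉ A')
    (haR : a ∈ Rdata B' A') (hmax : ∀ u ∈ Rdata B' A', u ≤ a)
    (hcB : cz ∉ B') :
    ∃ hL : (Ldata (insert cz B') (A'.erase a)).Nonempty,
      (Ldata (insert cz B') (A'.erase a)).min' hL = cz ∧
      sInf {j | cz - j - 1 ∉ insert cz B'} = s := by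
  classical
  subst hcz
  set c := a + s with hc
  have haA' : a ∈ A' := pairAux_snd_subset _ _ haR
  -- Step 1: Ico a c ⊆ B'
  have hIco : ∀ k, a ≤ k → k < c → k ∈ B' := by
    intro k hk1 hk2
    have hcount := pairAux_card_le (x := a) (K := c)
      (l := (B'.sort (· ≤ ·)).reverse) (P := A') haR
    have hsub : Finset.Ioc a c ⊆ (A' \ Rdata B' A').filter (fun m => a < m ∧ m ≤ c) := by
      intro y hy
      rw [Finset.mem_Ioc] at hy
      refine Finset.mem_filter.2 ⟨Finset.mem_sdiff.2 ⟨hA'mem y (by omega) (by omega), ?_⟩, hy⟩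
      intro hyR
      have := hmax y hyR
      omega
    have h1 : s ≤ ((A' \ Rdata B' A').filter (fun m => a < m ∧ m ≤ c)).card := by
      calc s = (Finset.Ioc a c).card := by rw [Nat.card_Ioc]; omega
        _ ≤ _ := Finset.card_le_card hsub
    have h2 : (((B'.sort (· ≤ ·)).reverse).filter (fun b => decide (a ≤ b ∧ b < c))).length
        = (B'.filter (fun b => a ≤ b ∧ b < c)).card := length_filter_eq_card _ _
    have h3 : s ≤ (B'.filter (fun b => a ≤ b ∧ b < c)).card := by
      rw [← h2]
      exact le_trans h1 hcount
    have h4 : B'.filter (fun b => a ≤ b ∧ b < c) = Finset.Ico a c := by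
      apply Finset.eq_of_subset_of_card_le
      · intro y hy
        rw [Finset.mem_Ico]
        exact (Finset.mem_filter.1 hy).2
      · rw [Nat.card_Ico]; omega
    have : k ∈ Finset.Ico a c := Finset.mem_Ico.2 ⟨hk1, hk2⟩
    rw [← h4] at this
    exact (Finset.mem_filter.1 this).1
  -- Step 2: a - 1 ∉ B'
  have hpred : a - 1 ∉ B' := by
    intro hmem
    exact pairAux_pred_not_mem (by omega) haR
      (List.mem_reverse.2 ((Finset.mem_sort (α := ℕ) (· ≤ ·)).2 hmem))
  -- Step 3: decompositions
  set B := insert c B' with hB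
  set A := A'.erase a with hA
  have hA'A : A' = insert a A := (Finset.insert_erase haA').symm
  have haA : a ∉ A := Finset.notMem_erase _ _
  set Bhi := B'.filter (fun k => c + 1 ≤ k) with hBhi
  set Blo := B'.filter (fun k => k < a) with hBlo
  set lhi := (Bhi.sort (· ≤ ·)).reverse with hlhi
  set llo := (Blo.sort (· ≤ ·)).reverse with hllo
  have hmemhi : ∀ b ∈ lhi, c + 1 ≤ b := by
    intro b hb
    exact (Finset.mem_filter.1 ((Finset.mem_sort (α := ℕ) (· ≤ ·)).1 (List.mem_reverse.1 hb))).2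
  have hmemlo : ∀ b ∈ llo, b < a := by
    intro b hb
    exact (Finset.mem_filter.1 ((Finset.mem_sort (α := ℕ) (· ≤ ·)).1 (List.mem_reverse.1 hb))).2
  have hdec' : (B'.sort (· ≤ ·)).reverse = lhi ++ ((List.range' a s).reverse ++ llo) := by
    rw [sort_decomp B' a s (fun k h1 h2 => hIco k h1 (by omega))]
    rw [List.reverse_append, List.reverse_append]
    have h1 : B'.filter (fun k => a + s ≤ k) = Bhi := by
      ext k
      simp only [hBhi, Finset.mem_filter]
      constructor
      · rintro ⟨hk, hge⟩
        refine ⟨hk, ?_⟩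
        rcases Nat.eq_or_lt_of_le hge with heq | hlt
        · exact absurd (show c ∈ B' by rw [hc, heq]; exact hk) hcB
        · omega
      · rintro ⟨hk, hge⟩; exact ⟨hk, by omega⟩
    rw [h1]
  have hdec : (B.sort (· ≤ ·)).reverse = lhi ++ ((c :: (List.range' a s).reverse) ++ llo) := by
    rw [sort_decomp B a (s + 1) (fun k h1 h2 => by
      rcases Nat.lt_or_ge k c with hlt | hge
      · exact Finset.mem_insert_of_mem (hIco k h1 hlt)
      · have : k = c := by omega
        exact this ▸ Finset.mem_insert_self _ _)]
    rw [List.reverse_append, List.reverse_append, ← range'_reverse_succ]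
    have h1 : B.filter (fun k => a + (s + 1) ≤ k) = Bhi := by
      ext k
      simp only [hB, hBhi, Finset.mem_filter, Finset.mem_insert]
      constructor
      · rintro ⟨(rfl | hk), hge⟩
        · omega
        · exact ⟨hk, by omega⟩
      · rintro ⟨hk, hge⟩; exact ⟨Or.inr hk, by omega⟩
    have h2 : B.filter (fun k => k < a) = Blo := by
      ext k
      simp only [hB, hBlo, Finset.mem_filter, Finset.mem_insert]
      constructor
      · rintro ⟨(rfl | hk), hlt⟩
        · omega
        · exact ⟨hk, hlt⟩
      · rintro ⟨hk, hlt⟩; exact ⟨Or.inr hk, hlt⟩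
    rw [h1, h2]
  -- Step 4: analyze the given (B', A') run
  set Q' := (pairAux lhi A').2 with hQ'
  set Uhi := (pairAux lhi A').1 with hUhi
  have hUhimem : ∀ u ∈ Uhi, c + 1 ≤ u := fun u hu => hmemhi u (pairAux_fst_subset _ _ u hu)
  have hQ'mem : ∀ k, a ≤ k → k ≤ c → k ∈ Q' := by
    intro k hk1 hk2
    exact pairAux_mem_of_le (fun b hb => by have := hmemhi b hb; omega) (hA'mem k hk1 hk2)
  have hblk : pairAux (List.range' a s).reverse Q'
      = (∅, Q'.filter fun m => ¬(a < m ∧ m ≤ a + s)) :=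
    pairAux_block a s Q' (fun k h1 h2 => hQ'mem k (by omega) h2)
  set V' := Q'.filter (fun m => ¬(a < m ∧ m ≤ a + s)) with hV'
  have hRsplit : Rdata B' A' = (pairAux llo V').2 := by
    rw [Rdata, hdec', pairAux_append, pairAux_append]
    simp only
    rw [← hQ', hblk]
  have haP' : a ∈ (pairAux llo V').2 := hRsplit ▸ haR
  have hUlo0 : (pairAux llo V').1 = ∅ := by
    rw [Finset.eq_empty_iff_forall_notMem]
    intro u hu
    have h1 := pairAux_unpaired_not_lt haP' u hu
    have h2 := hmemlo u (pairAux_fst_subset _ _ u hu)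
    omega
  have hQ'le : ∀ m ∈ Q', m ≤ c := by
    intro m hm
    by_contra hgt
    push_neg at hgt
    have hmV' : m ∈ V' := Finset.mem_filter.2 ⟨hm, by omega⟩
    have : m ∈ (pairAux llo V').2 :=
      pairAux_final_mem_low hmemlo haP' m hmV' (by omega)
    have := hmax m (hRsplit ▸ this)
    omega
  -- Step 5: the (B, A) run
  have hhi : pairAux lhi A' = ((pairAux lhi A).1, insert a (pairAux lhi A).2) := by
    rw [hA'A]
    exact pairAux_insert_high haA (fun b hb => by have := hmemhi b hb; omega)
  set Q := (pairAux lhi A).2 with hQdef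
  have haQ : a ∉ Q := fun h => haA (pairAux_snd_subset _ _ h)
  have hQ'insert : Q' = insert a Q := by rw [hQ', hhi]
  have hUhi' : (pairAux lhi A).1 = Uhi := by rw [hUhi, hhi]
  have hQfil : Q.filter (fun b => c < b) = ∅ := by
    rw [Finset.eq_empty_iff_forall_notMem]
    intro m hm
    rw [Finset.mem_filter] at hm
    have : m ∈ Q' := hQ'insert ▸ Finset.mem_insert_of_mem hm.1
    have := hQ'le m this
    omega
  have hblkQ : pairAux (List.range' a s).reverse Q
      = (∅, Q.filter fun m => ¬(a < m ∧ m ≤ a + s)) := by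
    apply pairAux_block
    intro k h1 h2
    have : k ∈ Q' := hQ'mem k (by omega) h2
    rw [hQ'insert, Finset.mem_insert] at this
    rcases this with rfl | h
    · omega
    · exact h
  set V := Q.filter (fun m => ¬(a < m ∧ m ≤ a + s)) with hVdef
  have haV : a ∉ V := fun h => haQ (Finset.mem_of_mem_filter _ h)
  have hV'insert : V' = insert a V := by
    rw [hV', hQ'insert, Finset.filter_insert, if_pos (by omega), hVdef]
  have hlo : pairAux llo V' = ((pairAux llo V).1, insert a (pairAux llo V).2) := by
    rw [hV'insert]
    apply pairAux_insert_mid haV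
    rw [← hV'insert]
    exact haP'
  have hUlo0' : (pairAux llo V).1 = ∅ := by
    have : (pairAux llo V').1 = (pairAux llo V).1 := by rw [hlo]
    rw [← this, hUlo0]
  -- assemble Ldata B A
  have hLdata : Ldata B A = Uhi ∪ ((∅ ∪ (pairAux llo V).1) ∪ {c}) := by
    rw [Ldata, hdec, pairAux_append, ← hQdef, hUhi']
    congr 1
    rw [List.cons_append, pairAux, dif_neg (by rw [hQfil]; exact Finset.not_nonempty_empty),
      pairAux_append, hblkQ]
  rw [hUlo0'] at hLdata
  have hcL : c ∈ Ldata B A := by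
    rw [hLdata]
    exact Finset.mem_union_right _ (Finset.mem_union_right _ (Finset.mem_singleton_self _))
  have hLne : (Ldata B A).Nonempty := ⟨c, hcL⟩
  refine ⟨hLne, ?_, ?_⟩
  · apply le_antisymm
    · exact Finset.min'_le _ _ hcL
    · apply Finset.le_min'
      intro y hy
      rw [hLdata] at hy
      rcases Finset.mem_union.1 hy with h | h
      · have := hUhimem y h; omega
      · rcases Finset.mem_union.1 h with h' | h'
        · simp at h'
        · have : y = c := by simpa using h'
          omega
  · have hsmem : s ∈ {j | c - j - 1 ∉ B} := by
      rw [Set.mem_setOf_eq]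
      rw [hB, Finset.mem_insert]
      push_neg
      constructor
      · omega
      · have : c - s - 1 = a - 1 := by omega
        rw [this]; exact hpred
    apply le_antisymm
    · exact Nat.sInf_le hsmem
    · by_contra hlt
      push_neg at hlt
      have hmem := Nat.sInf_mem (⟨s, hsmem⟩ : Set.Nonempty {j | c - j - 1 ∉ B})
      set j := sInf {j | c - j - 1 ∉ B} with hj
      have hjm : c - j - 1 ∉ B := hmem
      apply hjm
      rw [hB]
      exact Finset.mem_insert_of_mem (hIco _ (by omega) (by omega))

lemma eOp_eq_some_iff {ℓ : ℕ} (i : ℕ) (c d : Fin ℓ → Finset ℕ) (h1 : 1 ≤ i) (h2 : i < ℓ) :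
    eOp i c = some d ↔ ∃ B' A',
      eC (c ⟨i, h2⟩) (c ⟨i - 1, Nat.lt_of_le_of_lt (Nat.sub_le i 1) h2⟩) = some (B', A') ∧
      d = Function.update (Function.update c ⟨i, h2⟩ B')
        ⟨i - 1, Nat.lt_of_le_of_lt (Nat.sub_le i 1) h2⟩ A' := by
  rw [eOp, dif_pos (⟨h1, h2⟩ : 1 ≤ i ∧ i < ℓ)]
  split
  · rename_i heq
    have heq' : eC (c ⟨i, h2⟩) (c ⟨i - 1, Nat.lt_of_le_of_lt (Nat.sub_le i 1) h2⟩) = none := heq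
    constructor
    · intro hcontra; cases hcontra
    · rintro ⟨B', A', hBA, rfl⟩
      rw [heq'] at hBA
      cases hBA
  · rename_i B' A' heq
    have heq' : eC (c ⟨i, h2⟩) (c ⟨i - 1, Nat.lt_of_le_of_lt (Nat.sub_le i 1) h2⟩) = some (B', A') := heq
    constructor
    · intro hsome
      refine ⟨B', A', heq', ?_⟩
      exact (Option.some.inj hsome).symm
    · rintro ⟨B'', A'', hBA, rfl⟩
      rw [heq'] at hBA
      obtain ⟨rfl, rfl⟩ : B' = B'' ∧ A' = A'' := by
        have := Option.some.inj hBA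
        exact ⟨congrArg Prod.fst this, congrArg Prod.snd this⟩
      rfl

lemma fOp_eq_some_iff {ℓ : ℕ} (i : ℕ) (c d : Fin ℓ → Finset ℕ) (h1 : 1 ≤ i) (h2 : i < ℓ) :
    fOp i c = some d ↔ ∃ B' A',
      fC (c ⟨i, h2⟩) (c ⟨i - 1, Nat.lt_of_le_of_lt (Nat.sub_le i 1) h2⟩) = some (B', A') ∧
      d = Function.update (Function.update c ⟨i, h2⟩ B')
        ⟨i - 1, Nat.lt_of_le_of_lt (Nat.sub_le i 1) h2⟩ A' := by
  rw [fOp, dif_pos (⟨h1, h2⟩ : 1 ≤ i ∧ i < ℓ)]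
  split
  · rename_i heq
    have heq' : fC (c ⟨i, h2⟩) (c ⟨i - 1, Nat.lt_of_le_of_lt (Nat.sub_le i 1) h2⟩) = none := heq
    constructor
    · intro hcontra; cases hcontra
    · rintro ⟨B', A', hBA, rfl⟩
      rw [heq'] at hBA
      cases hBA
  · rename_i B' A' heq
    have heq' : fC (c ⟨i, h2⟩) (c ⟨i - 1, Nat.lt_of_le_of_lt (Nat.sub_le i 1) h2⟩) = some (B', A') := heq
    constructor
    · intro hsome
      refine ⟨B', A', heq', ?_⟩
      exact (Option.some.inj hsome).symm
    · rintro ⟨B'', A'', hBA, rfl⟩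
      rw [heq'] at hBA
      obtain ⟨rfl, rfl⟩ : B' = B'' ∧ A' = A'' := by
        have := Option.some.inj hBA
        exact ⟨congrArg Prod.fst this, congrArg Prod.snd this⟩
      rfl

lemma sum_card_update {ℓ : ℕ} (c : Fin ℓ → Finset ℕ) (iF iP : Fin ℓ) (hne : iF ≠ iP)
    (B' A' : Finset ℕ) :
    ∑ j, ((Function.update (Function.update c iF B') iP A') j).card + (c iF).card + (c iP).card
      = ∑ j, (c j).card + B'.card + A'.card := by
  classical
  have h1 : ∀ j, ((Function.update (Function.update c iF B') iP A') j).card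
      = Function.update (fun k => ((Function.update c iF B') k).card) iP A'.card j :=
    fun j => Function.apply_update (fun _ s => Finset.card s) _ _ _ j
  have h2 : ∀ j, ((Function.update c iF B') j).card
      = Function.update (fun k => (c k).card) iF B'.card j :=
    fun j => Function.apply_update (fun _ s => Finset.card s) _ _ _ j
  rw [Finset.sum_congr rfl (fun j _ => h1 j), Finset.sum_update_of_mem (Finset.mem_univ iP)]
  rw [Finset.sum_congr rfl (fun j _ => h2 j),
    Finset.sum_update_of_mem (by simp [hne] : iF ∈ Finset.univ \ {iP})]
  have h3 : ∑ j, (c j).card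
      = (c iP).card + ∑ j ∈ Finset.univ \ {iP}, (c j).card := by
    rw [Finset.sum_eq_add_sum_sdiff_singleton_of_mem (Finset.mem_univ iP)]
  have h4 : ∑ j ∈ Finset.univ \ {iP}, (c j).card
      = (c iF).card + ∑ j ∈ (Finset.univ \ {iP}) \ {iF}, (c j).card := by
    rw [Finset.sum_eq_add_sum_sdiff_singleton_of_mem (by simp [hne] : iF ∈ Finset.univ \ {iP})]
  omega

lemma update_update_cancel {ℓ : ℕ} (c : Fin ℓ → Finset ℕ) (iF iP : Fin ℓ) (hne : iF ≠ iP)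
    (B' A' : Finset ℕ) :
    Function.update (Function.update
      (Function.update (Function.update c iF B') iP A') iF (c iF)) iP (c iP) = c := by
  funext j
  rcases eq_or_ne j iP with rfl | hjP
  · rw [Function.update_self]
  · rw [Function.update_of_ne hjP]
    rcases eq_or_ne j iF with rfl | hjF
    · rw [Function.update_self]
    · rw [Function.update_of_ne hjF, Function.update_of_ne hjP, Function.update_of_ne hjF]

lemma Ldata_subset_left (B A : Finset ℕ) : ∀ u ∈ Ldata B A, u ∈ B := fun u hu =>
  (Finset.mem_sort (α := ℕ) (· ≤ ·)).1 (List.mem_reverse.1 (pairAux_fst_subset _ _ u hu))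

lemma Rdata_subset_right (B A : Finset ℕ) : ∀ u ∈ Rdata B A, u ∈ A := fun u hu =>
  pairAux_snd_subset _ _ hu

/-- For decreasing factorizations `b, b' ∈ 𝒲_w^ℓ` and `1 ≤ i < ℓ`:
`ẽᵢ(b) = b'` if and only if `f̃ᵢ(b') = b`. -/
theorem eOp_eq_iff_fOp_eq (n ℓ : ℕ) (w : Equiv.Perm (Fin n)) (c c' : Fin ℓ → Finset ℕ)
    (i : ℕ) (hi : 1 ≤ i) (hiℓ : i < ℓ)
    (hc : IsDecFactorizationC n ℓ w c) (hc' : IsDecFactorizationC n ℓ w c') :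
    eOp i c = some c' ↔ fOp i c' = some c := by
  classical
  have hsum : ∑ j, (c j).card = ∑ j, (c' j).card := by rw [← hc.2.2, ← hc'.2.2]
  have hneF : (⟨i, hiℓ⟩ : Fin ℓ) ≠ ⟨i - 1, Nat.lt_of_le_of_lt (Nat.sub_le i 1) hiℓ⟩ := by
    simp only [ne_eq, Fin.mk.injEq]
    omega
  constructor
  · intro h
    rw [eOp_eq_some_iff i c c' hi hiℓ] at h
    obtain ⟨B', A', heC, hc'eq⟩ := h
    rw [eC] at heC
    split at heC
    case isFalse => cases heC
    rename_i hL
    have hpair := Option.some.inj heC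
    obtain ⟨h1x, h2x⟩ := Prod.ext_iff.1 hpair
    simp only at h1x h2x
    subst h1x
    subst h2x
    subst hc'eq
    -- notation
    set SB := c ⟨i, hiℓ⟩ with hSB
    set SA := c ⟨i - 1, Nat.lt_of_le_of_lt (Nat.sub_le i 1) hiℓ⟩ with hSA
    set c₀ := (Ldata SB SA).min' hL with hc₀
    set t := sInf {j | c₀ - j - 1 ∉ SB} with ht
    -- basic facts
    have hc₀L : c₀ ∈ Ldata SB SA := Finset.min'_mem _ _
    have hc₀B : c₀ ∈ SB := Ldata_subset_left _ _ _ hc₀L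
    have h0B : 0 ∉ SB := fun h0 => by have := (hc.1 _ _ h0).1; omega
    have hc₀1 : 1 ≤ c₀ := by
      rcases Nat.eq_zero_or_pos c₀ with h0 | h0
      · exact absurd (h0 ▸ hc₀B) h0B
      · omega
    have hTmem : (c₀ - 1) ∈ {j | c₀ - j - 1 ∉ SB} := by
      have : c₀ - (c₀ - 1) - 1 = 0 := by omega
      rw [Set.mem_setOf_eq, this]
      exact h0B
    have htle : t ≤ c₀ - 1 := Nat.sInf_le hTmem
    have htlt : t < c₀ := by omega
    have htmem : c₀ - t - 1 ∉ SB := Nat.sInf_mem ⟨_, hTmem⟩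
    have hblk : ∀ j, j < t → c₀ - j - 1 ∈ SB := by
      intro j hj
      by_contra hn
      have hle : t ≤ j := Nat.sInf_le (show j ∈ {j | c₀ - j - 1 ∉ SB} from hn)
      omega
    -- cardinality: c₀ - t ∉ SA
    have hcards := sum_card_update c ⟨i, hiℓ⟩ ⟨i - 1, Nat.lt_of_le_of_lt (Nat.sub_le i 1) hiℓ⟩
      hneF (SB.erase c₀) (insert (c₀ - t) SA)
    rw [← hSB, ← hSA] at hcards
    have hBcard : (SB.erase c₀).card + 1 = SB.card := by
      rw [Finset.card_erase_of_mem hc₀B]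
      have : 0 < SB.card := Finset.card_pos.2 ⟨c₀, hc₀B⟩
      omega
    have hxA : c₀ - t ∉ SA := by
      intro hmem
      have hic : (insert (c₀ - t) SA).card = SA.card := by
        rw [Finset.insert_eq_self.2 hmem]
      have htest : ∑ j, (c j).card
          = ∑ j, ((Function.update (Function.update c ⟨i, hiℓ⟩ (SB.erase c₀))
              ⟨i - 1, Nat.lt_of_le_of_lt (Nat.sub_le i 1) hiℓ⟩ (insert (c₀ - t) SA)) j).card :=
        hsum
      omega
    -- apply fwd_core
    have hxteq : (c₀ - t) + t = c₀ := by omega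
    obtain ⟨hR, hmax, hsInf⟩ := fwd_core SB SA (c₀ - t) t c₀ hxteq (by omega)
      (fun k hk1 hk2 => by
        rcases Nat.eq_or_lt_of_le hk2 with heq | hlt
        · exact heq ▸ hc₀B
        · have hj : c₀ - (c₀ - k - 1) - 1 = k := by omega
          exact hj ▸ hblk (c₀ - k - 1) (by omega))
      htmem
      hc₀L
      (fun u hu => Finset.min'_le _ _ hu)
      hxA
    -- conclude
    rw [fOp_eq_some_iff i _ c hi hiℓ]
    refine ⟨SB, SA, ?_, ?_⟩
    · have e1 : (Function.update (Function.update c ⟨i, hiℓ⟩ (SB.erase c₀))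
          ⟨i - 1, Nat.lt_of_le_of_lt (Nat.sub_le i 1) hiℓ⟩ (insert (c₀ - t) SA)) ⟨i, hiℓ⟩
          = SB.erase c₀ := by
        rw [Function.update_of_ne hneF, Function.update_self]
      have e2 : (Function.update (Function.update c ⟨i, hiℓ⟩ (SB.erase c₀))
          ⟨i - 1, Nat.lt_of_le_of_lt (Nat.sub_le i 1) hiℓ⟩ (insert (c₀ - t) SA))
          ⟨i - 1, Nat.lt_of_le_of_lt (Nat.sub_le i 1) hiℓ⟩ = insert (c₀ - t) SA := by
        rw [Function.update_self]
      rw [e1, e2, fC, dif_pos hR, hmax, hsInf, hxteq, Finset.insert_erase hc₀B,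
        Finset.erase_insert hxA]
    · exact (update_update_cancel c ⟨i, hiℓ⟩ ⟨i - 1, Nat.lt_of_le_of_lt (Nat.sub_le i 1) hiℓ⟩
        hneF (SB.erase c₀) (insert (c₀ - t) SA)).symm
  · intro h
    rw [fOp_eq_some_iff i c' c hi hiℓ] at h
    obtain ⟨B, A, hfC, hceq⟩ := h
    rw [fC] at hfC
    split at hfC
    case isFalse => cases hfC
    rename_i hRne
    have hpair := Option.some.inj hfC
    obtain ⟨h1x, h2x⟩ := Prod.ext_iff.1 hpair
    simp only at h1x h2x
    subst h1x
    subst h2x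
    subst hceq
    set SB := c' ⟨i, hiℓ⟩ with hSB
    set SA := c' ⟨i - 1, Nat.lt_of_le_of_lt (Nat.sub_le i 1) hiℓ⟩ with hSA
    set a := (Rdata SB SA).max' hRne with ha
    set s := sInf {j | a + j + 1 ∉ SA} with hs
    have haR : a ∈ Rdata SB SA := Finset.max'_mem _ _
    have haA : a ∈ SA := Rdata_subset_right _ _ _ haR
    have ha1 : 1 ≤ a := (hc'.1 _ _ haA).1
    have hSne : {j | a + j + 1 ∉ SA}.Nonempty := by
      refine ⟨SA.sup id, fun hmem => ?_⟩
      have := Finset.le_sup (f := id) hmem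
      simp only [id] at this
      omega
    have hsmem : a + s + 1 ∉ SA := Nat.sInf_mem hSne
    have hblk : ∀ j, j < s → a + j + 1 ∈ SA := by
      intro j hj
      by_contra hn
      have hle : s ≤ j := Nat.sInf_le (show j ∈ {j | a + j + 1 ∉ SA} from hn)
      omega
    -- cardinality: a + s ∉ SB
    have hcards := sum_card_update c' ⟨i, hiℓ⟩ ⟨i - 1, Nat.lt_of_le_of_lt (Nat.sub_le i 1) hiℓ⟩
      hneF (insert (a + s) SB) (SA.erase a)
    rw [← hSB, ← hSA] at hcards
    have hAcard : (SA.erase a).card + 1 = SA.card := by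
      rw [Finset.card_erase_of_mem haA]
      have : 0 < SA.card := Finset.card_pos.2 ⟨a, haA⟩
      omega
    have hcB : a + s ∉ SB := by
      intro hmem
      have hic : (insert (a + s) SB).card = SB.card := by
        rw [Finset.insert_eq_self.2 hmem]
      have htest : ∑ j, (c' j).card
          = ∑ j, ((Function.update (Function.update c' ⟨i, hiℓ⟩ (insert (a + s) SB))
              ⟨i - 1, Nat.lt_of_le_of_lt (Nat.sub_le i 1) hiℓ⟩ (SA.erase a)) j).card :=
        hsum.symm
      omega
    -- apply bwd_core
    obtain ⟨hL, hmin, hsInf⟩ := bwd_core SB SA a s (a + s) rfl ha1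
      (fun k hk1 hk2 => by
        rcases Nat.eq_or_lt_of_le hk1 with heq | hlt
        · exact heq ▸ haA
        · have hj : a + (k - a - 1) + 1 = k := by omega
          exact hj ▸ hblk (k - a - 1) (by omega))
      hsmem haR (fun u hu => Finset.le_max' _ _ hu) hcB
    -- conclude
    rw [eOp_eq_some_iff i _ c' hi hiℓ]
    refine ⟨SB, SA, ?_, ?_⟩
    · have e1 : (Function.update (Function.update c' ⟨i, hiℓ⟩ (insert (a + s) SB))
          ⟨i - 1, Nat.lt_of_le_of_lt (Nat.sub_le i 1) hiℓ⟩ (SA.erase a)) ⟨i, hiℓ⟩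
          = insert (a + s) SB := by
        rw [Function.update_of_ne hneF, Function.update_self]
      have e2 : (Function.update (Function.update c' ⟨i, hiℓ⟩ (insert (a + s) SB))
          ⟨i - 1, Nat.lt_of_le_of_lt (Nat.sub_le i 1) hiℓ⟩ (SA.erase a))
          ⟨i - 1, Nat.lt_of_le_of_lt (Nat.sub_le i 1) hiℓ⟩ = SA.erase a := by
        rw [Function.update_self]
      rw [e1, e2, eC, dif_pos hL, hmin, hsInf]
      have hss : a + s - s = a := by omega
      rw [hss, Finset.erase_insert hcB, Finset.insert_erase haA]
    · exact (update_update_cancel c' ⟨i, hiℓ⟩ ⟨i - 1, Nat.lt_of_le_of_lt (Nat.sub_le i 1) hiℓ⟩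
        hneF (insert (a + s) SB) (SA.erase a)).symm

end
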